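/- Let n ≥ 4 and 0 < α ≤ log_{n−2}((n²−n−2)/(n²−n−4)). If H is a simple graph on n vertices that is not antiregular, then σ_t^α(H) ≤ ((n²−n−4)/2)·(n−2)^α ≤ (n²−n−2)/2. -/

import Mathlib

open Finset

/-- The degree of a vertex: the number of its neighbors. -/
noncomputable def deg {n : ℕ} (G : SimpleGraph (Fin n)) (v : Fin n) : ℕ :=
  Nat.card {u | G.Adj v u}

/-- `σ_t^α(G) = Σ_{{u,v}⊆V(G)} |d(u)−d(v)|^α`, summed over unordered pairs of
distinct vertices. -/
noncomputable def sigmaT {n : ℕ} (G : SimpleGraph (Fin n)) (α : ℝ) : ℝ :=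
  ∑ i : Fin n, ∑ j ∈ Finset.Ioi i, |((deg G i : ℝ)) - (deg G j : ℝ)| ^ α

/-- A graph on `n` vertices is antiregular if its vertices realize exactly
`n − 1` distinct degree values. -/
def IsAntiregular {n : ℕ} (G : SimpleGraph (Fin n)) : Prop :=
  (Finset.univ.image (deg G)).card = n - 1

open scoped Classical in
lemma deg_eq_degree {n : ℕ} (G : SimpleGraph (Fin n)) (v : Fin n) :
    deg G v = G.degree v := by
  rw [deg, ← SimpleGraph.card_neighborSet_eq_degree]
  exact Nat.card_eq_fintype_card

open scoped Classical in
lemma deg_lt {n : ℕ} (G : SimpleGraph (Fin n)) (v : Fin n) : deg G v < n := by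
  rw [deg_eq_degree]
  simpa using G.degree_lt_card_verts v

open scoped Classical in
lemma full_adj {n : ℕ} (G : SimpleGraph (Fin n)) (w v : Fin n) (hw : deg G w = n - 1)
    (hv : v ≠ w) : G.Adj w v := by
  classical
  rw [deg_eq_degree] at hw
  have hsub : G.neighborFinset w ⊆ Finset.univ.erase w := by
    intro u hu
    simp only [SimpleGraph.mem_neighborFinset] at hu
    exact Finset.mem_erase.2 ⟨fun h => G.irrefl (h ▸ hu), Finset.mem_univ u⟩
  have hcard : (Finset.univ.erase w).card ≤ (G.neighborFinset w).card := by
    rw [Finset.card_erase_of_mem (Finset.mem_univ w), Finset.card_univ, Fintype.card_fin]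
    rw [SimpleGraph.card_neighborFinset_eq_degree, hw]
  have := Finset.eq_of_subset_of_card_le hsub hcard
  have : v ∈ G.neighborFinset w := by rw [this]; exact Finset.mem_erase.2 ⟨hv, Finset.mem_univ v⟩
  simpa using this

open scoped Classical in
lemma deg_pos_of_full {n : ℕ} (G : SimpleGraph (Fin n)) (w v : Fin n) (hw : deg G w = n - 1)
    (hv : v ≠ w) : 1 ≤ deg G v := by
  have hadj : G.Adj v w := (full_adj G w v hw hv).symm
  rw [deg_eq_degree]
  rw [← SimpleGraph.card_neighborFinset_eq_degree]
  exact Finset.card_pos.2 ⟨w, by simpa using hadj⟩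

/-- degree difference is at most n - 2 -/
lemma deg_diff {n : ℕ} (hn : 2 ≤ n) (G : SimpleGraph (Fin n)) (i j : Fin n) :
    |((deg G i : ℝ)) - (deg G j : ℝ)| ≤ (n : ℝ) - 2 := by
  have hi := deg_lt G i
  have hj := deg_lt G j
  rcases eq_or_ne i j with rfl | hij
  · simp only [sub_self, abs_zero]
    have : (2:ℝ) ≤ n := by exact_mod_cast hn
    linarith
  have key : ∀ k l : Fin n, k ≠ l → (deg G k : ℤ) - deg G l ≤ (n : ℤ) - 2 := by
    intro k l hkl
    by_cases hk : deg G k = n - 1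
    · have h1 : 1 ≤ deg G l := deg_pos_of_full G k l hk hkl.symm
      have : (deg G k : ℤ) = (n : ℤ) - 1 := by
        rw [hk]; push_cast [Nat.cast_sub (by omega : 1 ≤ n)]; ring
      omega
    · have : deg G k ≤ n - 2 := by have := deg_lt G k; omega
      have h2 : (deg G k : ℤ) ≤ (n : ℤ) - 2 := by omega
      omega
  have h1 := key i j hij
  have h2 := key j i hij.symm
  rw [abs_sub_le_iff]
  constructor <;> [skip; skip] <;>
  · push_cast at h1 h2 ⊢
    first
    | exact_mod_cast by exact_mod_cast h1
    | exact_mod_cast by exact_mod_cast h2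
section helpers
variable {n : ℕ}

lemma pair_sum_eq (g : Fin n → Fin n → ℝ) :
    ∑ i : Fin n, ∑ j ∈ Finset.Ioi i, g i j
      = ∑ p ∈ (Finset.univ ×ˢ Finset.univ).filter
          (fun p : Fin n × Fin n => p.1 < p.2), g p.1 p.2 := by
  rw [Finset.sum_filter, Finset.sum_product]
  refine Finset.sum_congr rfl fun i _ => ?_
  rw [← Finset.sum_filter]
  congr 1
  ext j
  simp

lemma pair_card :
    ((Finset.univ ×ˢ Finset.univ).filter
      (fun p : Fin n × Fin n => p.1 < p.2)).card * 2 = n * n - n := by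
  classical
  set P := (Finset.univ ×ˢ Finset.univ).filter (fun p : Fin n × Fin n => p.1 < p.2) with hP
  set P' := (Finset.univ ×ˢ Finset.univ).filter (fun p : Fin n × Fin n => p.2 < p.1) with hP'
  have himg : P' = P.image Prod.swap := by
    ext p
    simp only [hP, hP', Finset.mem_image, Finset.mem_filter, Finset.mem_product,
      Finset.mem_univ, true_and]
    constructor
    · intro h; exact ⟨p.swap, by simpa using h, p.swap_swap⟩
    · rintro ⟨q, hq, rfl⟩; simpa using hq
  have hcard : P'.card = P.card := by
    rw [himg, Finset.card_image_of_injective _ Prod.swap_injective]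
  have hdisj : Disjoint P P' := by
    rw [Finset.disjoint_left]
    intro p hp hp'
    simp only [hP, hP', Finset.mem_filter] at hp hp'
    exact absurd hp'.2 (asymm hp.2)
  have hunion : P ∪ P' = (Finset.univ : Finset (Fin n)).offDiag := by
    ext p
    simp only [hP, hP', Finset.mem_union, Finset.mem_filter, Finset.mem_product,
      Finset.mem_offDiag, Finset.mem_univ, true_and]
    constructor
    · rintro (h | h)
      · exact ne_of_lt h
      · exact (ne_of_lt h).symm
    · intro h; exact lt_or_gt_of_ne h
  have := Finset.card_union_of_disjoint hdisj
  rw [hunion, Finset.offDiag_card, hcard] at this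
  simp only [Finset.card_univ, Fintype.card_fin] at this
  omega
end helpers

lemma image_card_le {n : ℕ} (hn : 2 ≤ n) (H : SimpleGraph (Fin n))
    (hH : ¬ IsAntiregular H) : (Finset.univ.image (deg H)).card ≤ n - 2 := by
  set I := Finset.univ.image (deg H) with hI
  have hsub : I ⊆ Finset.range n := by
    intro x hx
    simp only [hI, Finset.mem_image] at hx
    obtain ⟨v, -, rfl⟩ := hx
    exact Finset.mem_range.2 (deg_lt H v)
  have hle : I.card ≤ n := (Finset.card_le_card hsub).trans_eq (Finset.card_range n)
  have hne : I.card ≠ n := by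
    intro h
    have heq : I = Finset.range n :=
      Finset.eq_of_subset_of_card_le hsub (by rw [Finset.card_range, h])
    have h0 : (0 : ℕ) ∈ I := heq ▸ Finset.mem_range.2 (by omega)
    have h1 : n - 1 ∈ I := heq ▸ Finset.mem_range.2 (by omega)
    simp only [hI, Finset.mem_image] at h0 h1
    obtain ⟨u, -, hu⟩ := h0
    obtain ⟨w, -, hw⟩ := h1
    have huw : u ≠ w := fun h => by rw [h, hw] at hu; omega
    have := deg_pos_of_full H w u hw huw
    omega
  have hH' : I.card ≠ n - 1 := hH
  omega


/-- Let `n ≥ 4` and `0 < α ≤ log_{n−2}((n²−n−2)/(n²−n−4))`. If `H` is a simple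
graph on `n` vertices that is not antiregular, then
`σ_t^α(H) ≤ ((n²−n−4)/2)·(n−2)^α ≤ (n²−n−2)/2`. -/
theorem stmt_3 (n : ℕ) (hn : 4 ≤ n) (α : ℝ) (hα0 : 0 < α)
    (hα1 : α ≤ Real.logb ((n : ℝ) - 2)
        (((n : ℝ) ^ 2 - n - 2) / ((n : ℝ) ^ 2 - n - 4)))
    (H : SimpleGraph (Fin n)) (hH : ¬ IsAntiregular H) :
    sigmaT H α ≤ (((n : ℝ) ^ 2 - n - 4) / 2) * ((n : ℝ) - 2) ^ α ∧
      (((n : ℝ) ^ 2 - n - 4) / 2) * ((n : ℝ) - 2) ^ α ≤ ((n : ℝ) ^ 2 - n - 2) / 2 := by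
  classical
  have hnR : (4 : ℝ) ≤ (n : ℝ) := by exact_mod_cast hn
  set f := deg H with hf
  set M : ℝ := ((n : ℝ) - 2) ^ α with hM
  have hM0 : 0 ≤ M := Real.rpow_nonneg (by linarith) α
  -- find two distinct pairs with equal degrees
  have hIcard : (Finset.univ.image f).card ≤ n - 2 := image_card_le (by omega) H hH
  have hmaps : ∀ a ∈ (Finset.univ : Finset (Fin n)), f a ∈ Finset.univ.image f :=
    fun a _ => Finset.mem_image_of_mem f (Finset.mem_univ a)
  obtain ⟨a, -, b, -, hab, hfab⟩ :=
    Finset.exists_ne_map_eq_of_card_lt_of_maps_to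
      (by rw [Finset.card_univ, Fintype.card_fin]; omega) hmaps
  obtain ⟨c, hc, d, hd, hcd, hfcd⟩ :=
    Finset.exists_ne_map_eq_of_card_lt_of_maps_to
      (s := Finset.univ.erase a)
      (by rw [Finset.card_erase_of_mem (Finset.mem_univ a), Finset.card_univ,
            Fintype.card_fin]; omega)
      (fun x _ => hmaps x (Finset.mem_univ x))
  have hca : c ≠ a := (Finset.mem_erase.1 hc).1
  have hda : d ≠ a := (Finset.mem_erase.1 hd).1
  -- orient the pairs
  obtain ⟨x₁, y₁, hxy₁, hfeq₁, hx₁⟩ :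
      ∃ x y : Fin n, x < y ∧ f x = f y ∧ (x = a ∨ y = a) := by
    rcases lt_or_gt_of_ne hab with h | h
    · exact ⟨a, b, h, hfab, Or.inl rfl⟩
    · exact ⟨b, a, h, hfab.symm, Or.inr rfl⟩
  obtain ⟨x₂, y₂, hxy₂, hfeq₂, hx₂, hy₂⟩ :
      ∃ x y : Fin n, x < y ∧ f x = f y ∧ x ≠ a ∧ y ≠ a := by
    rcases lt_or_gt_of_ne hcd with h | h
    · exact ⟨c, d, h, hfcd, hca, hda⟩
    · exact ⟨d, c, h, hfcd.symm, hda, hca⟩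
  set P := (Finset.univ ×ˢ Finset.univ).filter (fun p : Fin n × Fin n => p.1 < p.2) with hP
  set t : Fin n × Fin n → ℝ := fun p => |((f p.1 : ℝ)) - (f p.2 : ℝ)| ^ α with ht
  have hsum : sigmaT H α = ∑ p ∈ P, t p := pair_sum_eq _
  have hp1 : (x₁, y₁) ∈ P := by simp [hP, hxy₁]
  have hp2 : (x₂, y₂) ∈ P := by simp [hP, hxy₂]
  have hp12 : (x₁, y₁) ≠ (x₂, y₂) := by
    intro h
    rw [Prod.mk.injEq] at h
    rcases hx₁ with rfl | rfl
    · exact hx₂ h.1.symm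
    · exact hy₂ h.2.symm
  have ht1 : t (x₁, y₁) = 0 := by
    simp only [ht, hfeq₁, sub_self, abs_zero]
    exact Real.zero_rpow hα0.ne'
  have ht2 : t (x₂, y₂) = 0 := by
    simp only [ht, hfeq₂, sub_self, abs_zero]
    exact Real.zero_rpow hα0.ne'
  set Q := (P.erase (x₁, y₁)).erase (x₂, y₂) with hQ
  have hp2' : (x₂, y₂) ∈ P.erase (x₁, y₁) := Finset.mem_erase.2 ⟨Ne.symm hp12, hp2⟩
  have hsum2 : ∑ p ∈ P, t p = ∑ p ∈ Q, t p := by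
    rw [← Finset.sum_erase_add P t hp1, ht1, add_zero,
        ← Finset.sum_erase_add _ t hp2', ht2, add_zero]
  have htle : ∀ p ∈ Q, t p ≤ M :=
    fun p _ => Real.rpow_le_rpow (abs_nonneg _) (deg_diff (by omega) H p.1 p.2) hα0.le
  have hQcard : Q.card = P.card - 2 := by
    rw [hQ, Finset.card_erase_of_mem hp2', Finset.card_erase_of_mem hp1]
    omega
  have hPcard := pair_card (n := n)
  have hP2 : 2 ≤ P.card := by
    have := Finset.one_lt_card.2 ⟨(x₁, y₁), hp1, (x₂, y₂), hp2, hp12⟩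
    omega
  have hQR : (Q.card : ℝ) ≤ ((n : ℝ) ^ 2 - (n : ℝ) - 4) / 2 := by
    have h1 : (Q.card : ℝ) = (P.card : ℝ) - 2 := by
      rw [hQcard]; push_cast [Nat.cast_sub hP2]; ring
    have h2 : (P.card : ℝ) * 2 = (n : ℝ) * n - n := by
      have hnn : n ≤ n * n := Nat.le_mul_of_pos_left n (by omega)
      have hcast : ((P.card * 2 : ℕ) : ℝ) = ((n * n - n : ℕ) : ℝ) := by
        exact_mod_cast congrArg (Nat.cast : ℕ → ℝ) hPcard
      push_cast [Nat.cast_sub hnn] at hcast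
      linarith
    nlinarith [h1, h2]
  have first : sigmaT H α ≤ (((n : ℝ) ^ 2 - n - 4) / 2) * M := by
    rw [hsum, hsum2]
    calc ∑ p ∈ Q, t p ≤ Q.card • M := Finset.sum_le_card_nsmul Q t M htle
      _ = (Q.card : ℝ) * M := nsmul_eq_mul _ _
      _ ≤ (((n : ℝ) ^ 2 - n - 4) / 2) * M := mul_le_mul_of_nonneg_right hQR hM0
  refine ⟨first, ?_⟩
  -- second inequality
  have hb1 : (1 : ℝ) < (n : ℝ) - 2 := by linarith
  have hden : (0 : ℝ) < (n : ℝ) ^ 2 - n - 4 := by nlinarith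
  have hnum : (0 : ℝ) < (n : ℝ) ^ 2 - n - 2 := by nlinarith
  have hxpos : (0 : ℝ) < ((n : ℝ) ^ 2 - n - 2) / ((n : ℝ) ^ 2 - n - 4) :=
    div_pos hnum hden
  have hMle : M ≤ ((n : ℝ) ^ 2 - n - 2) / ((n : ℝ) ^ 2 - n - 4) := by
    calc M ≤ ((n : ℝ) - 2) ^ Real.logb ((n : ℝ) - 2)
          (((n : ℝ) ^ 2 - n - 2) / ((n : ℝ) ^ 2 - n - 4)) :=
        Real.rpow_le_rpow_of_exponent_le hb1.le hα1
      _ = ((n : ℝ) ^ 2 - n - 2) / ((n : ℝ) ^ 2 - n - 4) :=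
        Real.rpow_logb (by linarith) (by linarith) hxpos
  calc (((n : ℝ) ^ 2 - n - 4) / 2) * M
      ≤ (((n : ℝ) ^ 2 - n - 4) / 2) * (((n : ℝ) ^ 2 - n - 2) / ((n : ℝ) ^ 2 - n - 4)) :=
        mul_le_mul_of_nonneg_left hMle (by linarith)
    _ = ((n : ℝ) ^ 2 - n - 2) / 2 := by
        rw [div_mul_div_comm, mul_comm (2 : ℝ), mul_div_mul_left _ _ hden.ne']
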